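/- (Corollary 2.4) Let Γ be a function defined and continuous on {(x,y) ∈ ℝⁿ × ℝⁿ : x ≠ y} satisfying (i) Γ(x,y) = Γ(y,x) > 0 for all x ≠ y; (iii) sup_{y∈K} Γ(x,y) → 0 as |x| → ∞, for every compact K ⊆ ℝⁿ. Let f : ℝⁿ → ℝ be continuous. Then for every x ∈ ℝⁿ, sup_{y ∈ Ω_r(x)} |f(y) − f(x)| → 0 as r → 0⁺. -/

import Mathlib

open MeasureTheory Filter Topology Metric

/-- The `L`-ball `Ω_r(x) := {y ≠ x : Γ(x,y) > 1/r} ∪ {x}`. -/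
def LBall {n : ℕ} (Γ : EuclideanSpace ℝ (Fin n) → EuclideanSpace ℝ (Fin n) → ℝ)
    (x : EuclideanSpace ℝ (Fin n)) (r : ℝ) : Set (EuclideanSpace ℝ (Fin n)) :=
  {y | y ≠ x ∧ 1 / r < Γ x y} ∪ {x}

/-- Corollary 2.4: under hypotheses (i) and (iii) on `Γ`, if
`f : ℝⁿ → ℝ` is continuous then, for every `x`,
`sup_{y ∈ Ω_r(x)} |f(y) − f(x)| → 0` as `r → 0⁺`. -/
theorem sup_oscillation_on_LBall_tendsto_zero {n : ℕ}
    (Γ : EuclideanSpace ℝ (Fin n) → EuclideanSpace ℝ (Fin n) → ℝ)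
    (hcont : ContinuousOn (fun p : EuclideanSpace ℝ (Fin n) × EuclideanSpace ℝ (Fin n) =>
      Γ p.1 p.2) {p | p.1 ≠ p.2})
    (hsymm : ∀ x y, x ≠ y → Γ x y = Γ y x)
    (hpos : ∀ x y, x ≠ y → 0 < Γ x y)
    (hdecay : ∀ K : Set (EuclideanSpace ℝ (Fin n)), IsCompact K →
      Tendsto (fun x => ⨆ y : K, Γ x (y : EuclideanSpace ℝ (Fin n)))
        (Filter.cocompact _) (𝓝 0))
    (f : EuclideanSpace ℝ (Fin n) → ℝ) (hf : Continuous f)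
    (x : EuclideanSpace ℝ (Fin n)) :
    Tendsto (fun r : ℝ => ⨆ y : LBall Γ x r, |f (y : EuclideanSpace ℝ (Fin n)) - f x|)
      (𝓝[>] 0) (𝓝 0) := by
  rw [Metric.tendsto_nhdsWithin_nhds]
  intro ε hε
  -- continuity of f at x
  obtain ⟨δ, hδ0, hδ⟩ := Metric.continuous_iff.1 hf x (ε/2) (by linarith)
  -- decay: Γ z x < 1 outside a compact set
  have hdec := (hdecay {x} isCompact_singleton).eventually (gt_mem_nhds one_pos)
  rw [hasBasis_cocompact.eventually_iff] at hdec
  obtain ⟨C, hC, hCs⟩ := hdec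
  -- simplify the sup over the singleton
  have hsing : ∀ z, (⨆ y : ({x} : Set (EuclideanSpace ℝ (Fin n))), Γ z y) = Γ z x := by
    intro z
    have : ∀ y : ({x} : Set (EuclideanSpace ℝ (Fin n))), Γ z (y : _) = Γ z x := by
      rintro ⟨y, hy⟩; simp at hy; simp [hy]
    rw [iSup_congr this]; exact ciSup_const
  -- bound Γ x on the far region
  set S : Set (EuclideanSpace ℝ (Fin n)) := C ∩ {y | δ ≤ dist y x} with hS
  have hScpt : IsCompact S := hC.inter_right (isClosed_le continuous_const (continuous_id.dist continuous_const))
  have hScont : ContinuousOn (fun y => Γ x y) S := by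
    have h1 : ContinuousOn (fun y : EuclideanSpace ℝ (Fin n) => Γ x y) {y | y ≠ x} := by
      have := hcont.comp (continuousOn_const.prodMk continuousOn_id)
        (fun y (hy : y ∈ {y | y ≠ x}) => (Ne.symm hy : x ≠ y))
      exact this
    refine h1.mono ?_
    intro y hy
    have : δ ≤ dist y x := hy.2
    intro h; rw [h] at this; simp at this; linarith
  obtain ⟨M₀, hM₀⟩ := hScpt.exists_bound_of_continuousOn hScont
  set M : ℝ := max M₀ 1 with hM
  have hMpos : 0 < M := lt_of_lt_of_le one_pos (le_max_right _ _)
  have hbound : ∀ y, δ ≤ dist y x → Γ x y ≤ M := by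
    intro y hy
    have hyx : y ≠ x := by intro h; rw [h] at hy; simp at hy; linarith
    by_cases hyC : y ∈ C
    · have := hM₀ y ⟨hyC, hy⟩
      calc Γ x y ≤ |Γ x y| := le_abs_self _
        _ ≤ M₀ := this
        _ ≤ M := le_max_left _ _
    · have h1 : Γ y x < 1 := by
        have := hCs hyC; rwa [hsing] at this
      have : Γ x y = Γ y x := hsymm x y (Ne.symm hyx)
      rw [this]
      exact le_trans h1.le (le_max_right _ _)
  refine ⟨1 / M, by positivity, ?_⟩
  intro r hr hrM
  rw [Real.dist_eq, sub_zero] at hrM ⊢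
  rw [abs_of_pos hr] at hrM
  -- for such r, LBall ⊆ ball x δ ∪ {x}
  have hrr : 0 < r := hr
  have hMr : M < 1 / r := by
    have := one_div_lt_one_div_of_lt hrr hrM
    rwa [one_div_one_div] at this
  have hsub : ∀ y : LBall Γ x r, |f (y : EuclideanSpace ℝ (Fin n)) - f x| ≤ ε / 2 := by
    rintro ⟨y, hy⟩
    rcases hy with ⟨hyx, hyΓ⟩ | hy
    · -- Γ x y > 1/r > M ⇒ dist y x < δ
      have : dist y x < δ := by
        by_contra h
        push_neg at h
        exact absurd (hbound y h) (by linarith)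
      have := hδ y this
      rw [Real.dist_eq] at this
      exact this.le
    · simp only [Set.mem_singleton_iff] at hy
      simp [hy]; linarith
  have hnn : (0:ℝ) ≤ ⨆ y : LBall Γ x r, |f (y : EuclideanSpace ℝ (Fin n)) - f x| :=
    Real.iSup_nonneg fun y => abs_nonneg _
  rw [abs_of_nonneg hnn]
  have := Real.iSup_le hsub (by linarith)
  linarith
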